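/- Let f = h + conj(g) be harmonic in the unit disk 𝔻 with positive Jacobian J_f = |h'|² − |g'|² > 0 in 𝔻, and suppose Λ_y((h−g)(𝔻)) = Λ_y(f(𝔻)). If h − g is injective on 𝔻 and (h−g)(𝔻) is the union of two non-disjoint domains each convex in the direction of the real axis, then f is injective on 𝔻 and f(𝔻) is the union of two non-disjoint domains each convex in the direction of the real axis. -/

import Mathlib

open Complex Set Metric

/-- Projection of a planar set onto the imaginary axis. -/
def Py (D : Set ℂ) : Set ℝ := {a : ℝ | ∃ z ∈ D, z.im = a}

/-- `Λ_y(D)`: imaginary parts `a` such that the horizontal slice of `D` at height `a`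
is nonempty and connected. -/
def Ly (D : Set ℂ) : Set ℝ := {a : ℝ | IsConnected (D ∩ {z : ℂ | z.im = a})}

/-- Convexity in the direction of the real axis. -/
def CvxRe (D : Set ℂ) : Prop :=
  ∀ z ∈ D, ∀ w ∈ D, z.im = w.im → segment ℝ z w ⊆ D

/-- Local injectivity of `q` on `S`. -/
def LocInjOn (q : ℂ → ℂ) (S : Set ℂ) : Prop :=
  ∀ z ∈ S, ∃ U ∈ nhdsWithin z S, Set.InjOn q U

/-- positivity of the shear derivative expression -/
lemma pos_aux {a b : ℂ} (hab : ‖b‖ < ‖a‖) :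
    0 < 1 + 2 * ((a - b)⁻¹ * b).re := by
  have hc : a - b ≠ 0 := sub_ne_zero.2 (by rintro rfl; exact lt_irrefl _ hab)
  have h2 : Complex.normSq b < Complex.normSq a := by
    rw [← Complex.sq_norm, ← Complex.sq_norm]
    exact pow_lt_pow_left₀ hab (norm_nonneg _) (by norm_num)
  have hnc : 0 < Complex.normSq (a - b) := Complex.normSq_pos.2 hc
  have hre : ((a - b)⁻¹ * b).re = (b.re * (a-b).re + b.im * (a-b).im) / Complex.normSq (a-b) := by
    rw [mul_comm, ← div_eq_mul_inv, Complex.div_re]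
    ring
  rw [hre]
  rw [show (1 : ℝ) + 2 * ((b.re * (a-b).re + b.im * (a-b).im) / Complex.normSq (a-b))
      = (Complex.normSq (a-b) + 2 * (b.re * (a-b).re + b.im * (a-b).im)) / Complex.normSq (a-b) by
    field_simp]
  apply div_pos _ hnc
  have h2' : b.re * b.re + b.im * b.im < a.re * a.re + a.im * a.im := by
    simpa [Complex.normSq_apply] using h2
  simp only [Complex.normSq_apply, Complex.sub_re, Complex.sub_im]
  nlinarith [h2']

/-- points on the horizontal segment -/
lemma seg_aux {w w' : ℂ} (him : w.im = w'.im) (hle : w.re ≤ w'.re) {s : ℝ}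
    (hs : s ∈ Icc w.re w'.re) : (↑s + ↑w.im * I) ∈ segment ℝ w w' := by
  rcases eq_or_lt_of_le hle with heq | hlt
  · have : s = w.re := le_antisymm (heq ▸ hs.2) hs.1
    subst this
    have : (↑w.re + ↑w.im * I) = w := Complex.re_add_im w
    rw [this]; exact left_mem_segment ℝ w w'
  · set θ : ℝ := (s - w.re) / (w'.re - w.re) with hθ
    have hd : 0 < w'.re - w.re := sub_pos.2 hlt
    have hθ0 : 0 ≤ θ := div_nonneg (sub_nonneg.2 hs.1) hd.le
    have hθ1 : θ ≤ 1 := (div_le_one hd).2 (sub_le_sub_right hs.2 _)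
    refine ⟨1 - θ, θ, by linarith, hθ0, by ring, ?_⟩
    have hsm : ∀ (r : ℝ) (z : ℂ), r • z = (r : ℂ) * z := fun r z => Complex.real_smul
    rw [hsm, hsm]
    apply Complex.ext
    · simp only [Complex.add_re, Complex.mul_re, Complex.ofReal_re, Complex.ofReal_im,
        Complex.mul_im, Complex.I_re, Complex.I_im]
      have hθd : θ * (w'.re - w.re) = s - w.re := div_mul_cancel₀ _ hd.ne'
      linear_combination hθd
    · simp only [Complex.add_im, Complex.mul_im, Complex.ofReal_re, Complex.ofReal_im,
        Complex.mul_re, Complex.I_re, Complex.I_im]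
      rw [him]; ring

/-- convexity of horizontal slices -/
lemma cvx_slice {Θ : Set ℂ} (hc : CvxRe Θ) (a : ℝ) : Convex ℝ (Θ ∩ {z : ℂ | z.im = a}) := by
  intro x hx y hy α β hα hβ hαβ
  constructor
  · exact hc x hx.1 y hy.1 (hx.2.trans hy.2.symm) ⟨α, β, hα, hβ, hαβ, rfl⟩
  · have hxa : x.im = a := hx.2
    have hya : y.im = a := hy.2
    show (α • x + β • y).im = a
    rw [Complex.add_im, Complex.smul_im, Complex.smul_im, hxa, hya]
    simp only [smul_eq_mul]
    linear_combination a * hαβ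

/-- The real-linear map `v ↦ a v + conj (b v)` as a continuous linear equivalence,
when `|b| < |a|`. -/
noncomputable def shearCLE (a b : ℂ) (hab : Complex.normSq b < Complex.normSq a) : ℂ ≃L[ℝ] ℂ :=
  LinearEquiv.toContinuousLinearEquiv
  { toFun := fun v => a * v + (starRingEnd ℂ) (b * v)
    map_add' := by intro v w; simp only [map_add, mul_add]; ring
    map_smul' := by
      intro r v
      simp only [RingHom.id_apply, Complex.real_smul, map_mul, Complex.conj_ofReal]
      ring
    invFun := fun w => ((Complex.normSq a - Complex.normSq b : ℝ) : ℂ)⁻¹ *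
      ((starRingEnd ℂ) a * w - (starRingEnd ℂ) b * (starRingEnd ℂ) w)
    left_inv := by
      intro v
      have hΔ : ((Complex.normSq a - Complex.normSq b : ℝ) : ℂ) ≠ 0 :=
        Complex.ofReal_ne_zero.2 (sub_ne_zero.2 (ne_of_gt hab))
      have key : (starRingEnd ℂ) a * a - (starRingEnd ℂ) b * b
          = ((Complex.normSq a - Complex.normSq b : ℝ) : ℂ) := by
        rw [mul_comm, Complex.mul_conj, mul_comm, Complex.mul_conj]
        push_cast; ring
      rw [inv_mul_eq_iff_eq_mul₀ hΔ]
      simp only [map_add, map_mul, Complex.conj_conj]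
      linear_combination v * key
    right_inv := by
      intro w
      have hΔ : ((Complex.normSq a - Complex.normSq b : ℝ) : ℂ) ≠ 0 :=
        Complex.ofReal_ne_zero.2 (sub_ne_zero.2 (ne_of_gt hab))
      have key : (starRingEnd ℂ) a * a - (starRingEnd ℂ) b * b
          = ((Complex.normSq a - Complex.normSq b : ℝ) : ℂ) := by
        rw [mul_comm, Complex.mul_conj, mul_comm, Complex.mul_conj]
        push_cast; ring
      have hconj : (starRingEnd ℂ) (((Complex.normSq a - Complex.normSq b : ℝ) : ℂ)⁻¹)
          = ((Complex.normSq a - Complex.normSq b : ℝ) : ℂ)⁻¹ := by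
        rw [map_inv₀, Complex.conj_ofReal]
      simp only [map_mul, map_sub, Complex.conj_conj, hconj]
      set Δ : ℂ := ((Complex.normSq a - Complex.normSq b : ℝ) : ℂ) with hΔdef
      set X : ℂ := (starRingEnd ℂ) a * w - (starRingEnd ℂ) b * (starRingEnd ℂ) w with hX
      rw [show a * (Δ⁻¹ * X) + (starRingEnd ℂ) b * (Δ⁻¹ * (a * (starRingEnd ℂ) w - b * w))
          = Δ⁻¹ * (a * X + (starRingEnd ℂ) b * (a * (starRingEnd ℂ) w - b * w)) from by ring,
        inv_mul_eq_iff_eq_mul₀ hΔ, hX]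
      linear_combination w * key }

open Filter Topology in
lemma shearCLE_apply (a b : ℂ) (hab : Complex.normSq b < Complex.normSq a) (v : ℂ) :
    shearCLE a b hab v = a * v + (starRingEnd ℂ) (b * v) := rfl

open scoped Topology in
/-- open mapping property for the harmonic map at a point -/
lemma fmap_nhds {h g : ℂ → ℂ} {A B z : ℂ}
    (ha : HasStrictDerivAt h A z) (hb : HasStrictDerivAt g B z)
    (hab : ‖B‖ < ‖A‖) :
    Filter.map (fun z => h z + (starRingEnd ℂ) (g z)) (𝓝 z)
      = 𝓝 (h z + (starRingEnd ℂ) (g z)) := by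
  have hab' : Complex.normSq B < Complex.normSq A := by
    rw [← Complex.sq_norm, ← Complex.sq_norm]
    exact pow_lt_pow_left₀ hab (norm_nonneg _) (by norm_num)
  set e := shearCLE A B hab' with he
  have h1 : HasStrictFDerivAt h ((ContinuousLinearMap.smulRight (1 : ℂ →L[ℂ] ℂ) A).restrictScalars ℝ) z :=
    ha.hasStrictFDerivAt.restrictScalars ℝ
  have h2 : HasStrictFDerivAt (fun z => (starRingEnd ℂ) (g z))
      ((Complex.conjCLE : ℂ →L[ℝ] ℂ).comp
        ((ContinuousLinearMap.smulRight (1 : ℂ →L[ℂ] ℂ) B).restrictScalars ℝ)) z := by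
    have := (Complex.conjCLE : ℂ →L[ℝ] ℂ).hasStrictFDerivAt.comp z
      (hb.hasStrictFDerivAt.restrictScalars ℝ)
    exact this
  have hsum := h1.add h2
  have heq : ((ContinuousLinearMap.smulRight (1 : ℂ →L[ℂ] ℂ) A).restrictScalars ℝ
      + (Complex.conjCLE : ℂ →L[ℝ] ℂ).comp
        ((ContinuousLinearMap.smulRight (1 : ℂ →L[ℂ] ℂ) B).restrictScalars ℝ))
      = (e : ℂ →L[ℝ] ℂ) := by
    apply ContinuousLinearMap.ext
    intro v
    simp only [ContinuousLinearMap.add_apply, ContinuousLinearMap.coe_restrictScalars',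
      ContinuousLinearMap.smulRight_apply, ContinuousLinearMap.one_apply,
      ContinuousLinearMap.coe_comp', Function.comp_apply,
      ContinuousLinearEquiv.coe_coe, Complex.conjCLE_apply]
    rw [he, shearCLE_apply]
    simp [smul_eq_mul]
    ring
  rw [heq] at hsum
  exact hsum.map_nhds_eq_of_equiv

open scoped Topology in
theorem shear_generalization_backward
    (h g : ℂ → ℂ)
    (hh : DifferentiableOn ℂ h (ball (0 : ℂ) 1))
    (hg : DifferentiableOn ℂ g (ball (0 : ℂ) 1))
    (f : ℂ → ℂ) (hf : ∀ z, f z = h z + (starRingEnd ℂ) (g z))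
    (hJ : ∀ z ∈ ball (0 : ℂ) 1, ‖deriv g z‖ < ‖deriv h z‖)
    (hLy : Ly ((fun z => h z - g z) '' ball (0 : ℂ) 1) = Ly (f '' ball (0 : ℂ) 1))
    (hinj : Set.InjOn (fun z => h z - g z) (ball (0 : ℂ) 1))
    (hdec : ∃ Ω₁ Ω₂ : Set ℂ, IsOpen Ω₁ ∧ IsConnected Ω₁ ∧ CvxRe Ω₁ ∧
      IsOpen Ω₂ ∧ IsConnected Ω₂ ∧ CvxRe Ω₂ ∧ (Ω₁ ∩ Ω₂).Nonempty ∧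
      (fun z => h z - g z) '' ball (0 : ℂ) 1 = Ω₁ ∪ Ω₂) :
    Set.InjOn f (ball (0 : ℂ) 1) ∧
    ∃ D₁ D₂ : Set ℂ, IsOpen D₁ ∧ IsConnected D₁ ∧ CvxRe D₁ ∧
      IsOpen D₂ ∧ IsConnected D₂ ∧ CvxRe D₂ ∧ (D₁ ∩ D₂).Nonempty ∧
      f '' ball (0 : ℂ) 1 = D₁ ∪ D₂ := by
  classical
  obtain ⟨Ω₁, Ω₂, hΩ₁o, hΩ₁c, hΩ₁x, hΩ₂o, hΩ₂c, hΩ₂x, hΩ₀, hΩeq⟩ := hdec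
  set D : Set ℂ := ball (0 : ℂ) 1 with hDdef
  set φ : ℂ → ℂ := fun z => h z - g z with hφdef
  set Ω : Set ℂ := φ '' D with hΩdef
  have hΩ12 : Ω = Ω₁ ∪ Ω₂ := hΩeq
  have hDo : IsOpen D := isOpen_ball
  -- basic calculus facts
  have hhz : ∀ z ∈ D, HasStrictDerivAt h (deriv h z) z := by
    intro z hz
    exact (hh.analyticAt (hDo.mem_nhds hz)).hasStrictFDerivAt.hasStrictDerivAt
  have hgz : ∀ z ∈ D, HasStrictDerivAt g (deriv g z) z := by
    intro z hz
    exact (hg.analyticAt (hDo.mem_nhds hz)).hasStrictFDerivAt.hasStrictDerivAt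
  have hc : ∀ z ∈ D, deriv h z - deriv g z ≠ 0 := by
    intro z hz
    apply sub_ne_zero.2
    intro e
    have := hJ z hz
    rw [e] at this
    exact lt_irrefl _ this
  have hφz : ∀ z ∈ D, HasStrictDerivAt φ (deriv h z - deriv g z) z :=
    fun z hz => (hhz z hz).sub (hgz z hz)
  -- inverse
  set ψ : ℂ → ℂ := Function.invFunOn φ D with hψdef
  have hψmem : ∀ w ∈ Ω, ψ w ∈ D := by
    rintro w ⟨z, hz, rfl⟩
    exact Function.invFunOn_mem ⟨z, hz, rfl⟩
  have hφψ : ∀ w ∈ Ω, φ (ψ w) = w := by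
    rintro w ⟨z, hz, rfl⟩
    exact Function.invFunOn_eq ⟨z, hz, rfl⟩
  have hψφ : ∀ z ∈ D, ψ (φ z) = z := fun z hz => hinj.leftInvOn_invFunOn hz
  have hΩnhds : ∀ w ∈ Ω, Ω ∈ 𝓝 w := by
    rintro w ⟨z, hz, rfl⟩
    rw [← (hφz z hz).map_nhds_eq (hc z hz)]
    exact Filter.image_mem_map (hDo.mem_nhds hz)
  have hΩo : IsOpen Ω := isOpen_iff_mem_nhds.2 hΩnhds
  have hψd : ∀ w ∈ Ω, HasStrictDerivAt ψ (deriv h (ψ w) - deriv g (ψ w))⁻¹ w := by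
    rintro w ⟨z, hz, rfl⟩
    have hev : ∀ᶠ x in 𝓝 z, ψ (φ x) = x := by
      filter_upwards [hDo.mem_nhds hz] with x hx using hψφ x hx
    have := (hφz z hz).to_local_left_inverse (hc z hz) hev
    rwa [hψφ z hz]
  have hψcont : ContinuousOn ψ Ω := fun w hw => ((hψd w hw).hasDerivAt.continuousAt).continuousWithinAt
  -- the shear factor
  set F : ℂ → ℂ := fun w => w + 2 * ((g (ψ w)).re : ℂ) with hFdef
  have hFf : ∀ z ∈ D, F (φ z) = f z := by
    intro z hz
    rw [hf z]
    show φ z + 2 * ((g (ψ (φ z))).re : ℂ) = h z + (starRingEnd ℂ) (g z)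
    rw [hψφ z hz]
    show h z - g z + 2 * ((g z).re : ℂ) = h z + (starRingEnd ℂ) (g z)
    have hac : g z + (starRingEnd ℂ) (g z) = 2 * (((g z).re : ℝ) : ℂ) := by
      rw [Complex.add_conj]; push_cast; ring
    linear_combination -hac
  have hFim : ∀ w, (F w).im = w.im := by
    intro w
    simp [hFdef]
  have hfD : f '' D = F '' Ω := by
    rw [hΩdef, Set.image_image]
    exact (Set.image_congr fun z hz => (hFf z hz).symm)
  have hFcont : ContinuousOn F Ω := by
    apply ContinuousOn.add continuousOn_id
    apply ContinuousOn.mul continuousOn_const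
    apply Complex.continuous_ofReal.comp_continuousOn
    apply Complex.continuous_re.comp_continuousOn
    exact hg.continuousOn.comp hψcont (fun w hw => hψmem w hw)
  -- derivative along horizontal lines
  have hu : ∀ (a t : ℝ), ((t : ℂ) + (a : ℂ) * I) ∈ Ω →
      HasDerivAt (fun t : ℝ => t + 2 * (g (ψ ((t : ℂ) + (a : ℂ) * I))).re)
        (1 + 2 * ((deriv h (ψ ((t : ℂ) + (a : ℂ) * I)) - deriv g (ψ ((t : ℂ) + (a : ℂ) * I)))⁻¹
          * deriv g (ψ ((t : ℂ) + (a : ℂ) * I))).re) t := by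
    intro a t hw
    set w : ℂ := (t : ℂ) + (a : ℂ) * I with hwdef
    have hcder : HasDerivAt (fun t : ℝ => (t : ℂ) + (a : ℂ) * I) 1 t := by
      simpa using (Complex.ofRealCLM.hasDerivAt (x := t)).add_const ((a : ℂ) * I)
    have hψder : HasDerivAt ψ (deriv h (ψ w) - deriv g (ψ w))⁻¹ w := (hψd w hw).hasDerivAt
    have hcomp1 : HasDerivAt (fun t : ℝ => ψ ((t : ℂ) + (a : ℂ) * I))
        ((1 : ℂ) • (deriv h (ψ w) - deriv g (ψ w))⁻¹) t := by
      simpa [Function.comp_def] using HasDerivAt.scomp t hψder hcder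
    have hgder : HasDerivAt g (deriv g (ψ w)) (ψ w) := (hgz (ψ w) (hψmem w hw)).hasDerivAt
    have hcomp2 : HasDerivAt (fun t : ℝ => g (ψ ((t : ℂ) + (a : ℂ) * I)))
        (((1 : ℂ) • (deriv h (ψ w) - deriv g (ψ w))⁻¹) • deriv g (ψ w)) t :=
      HasDerivAt.scomp t hgder hcomp1
    have hre : HasDerivAt (fun t : ℝ => (g (ψ ((t : ℂ) + (a : ℂ) * I))).re)
        (((deriv h (ψ w) - deriv g (ψ w))⁻¹ * deriv g (ψ w)).re) t := by
      have := Complex.reCLM.hasFDerivAt.comp_hasDerivAt t hcomp2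
      simpa [smul_eq_mul, Function.comp_def] using this
    have := (hasDerivAt_id t).add (hre.const_mul (2 : ℝ))
    simpa [hwdef, mul_comm, Pi.add_def] using this
  have hupos : ∀ (a t : ℝ) (hw : ((t : ℂ) + (a : ℂ) * I) ∈ Ω),
      0 < 1 + 2 * ((deriv h (ψ ((t : ℂ) + (a : ℂ) * I)) - deriv g (ψ ((t : ℂ) + (a : ℂ) * I)))⁻¹
          * deriv g (ψ ((t : ℂ) + (a : ℂ) * I))).re := by
    intro a t hw
    exact pos_aux (hJ _ (hψmem _ hw))
  have humono : ∀ (a t₁ t₂ : ℝ), t₁ < t₂ → (∀ s ∈ Icc t₁ t₂, ((s : ℂ) + (a : ℂ) * I) ∈ Ω) →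
      (t₁ + 2 * (g (ψ ((t₁ : ℂ) + (a : ℂ) * I))).re)
        < (t₂ + 2 * (g (ψ ((t₂ : ℂ) + (a : ℂ) * I))).re) := by
    intro a t₁ t₂ hlt hsub
    have hmono := strictMonoOn_of_deriv_pos (convex_Icc t₁ t₂)
      (f := fun t : ℝ => t + 2 * (g (ψ ((t : ℂ) + (a : ℂ) * I))).re)
      (fun t ht => ((hu a t (hsub t ht)).differentiableAt.continuousAt).continuousWithinAt)
      (by
        intro x hx
        rw [interior_Icc] at hx
        rw [(hu a x (hsub x (Ioo_subset_Icc_self hx))).deriv]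
        exact hupos a x (hsub x (Ioo_subset_Icc_self hx)))
    exact hmono (left_mem_Icc.2 hlt.le) (right_mem_Icc.2 hlt.le) hlt
  -- key impossibility
  have key : ∀ w w', w ∈ Ω → w' ∈ Ω → w.im = w'.im → F w = F w' → w.re < w'.re → False := by
    intro w w' hw hw' him hFeq hlt
    set a : ℝ := w.im with hadef
    have hwa : ((w.re : ℂ) + (a : ℂ) * I) = w := Complex.re_add_im w
    have hw'a : ((w'.re : ℂ) + (a : ℂ) * I) = w' := by
      rw [him]; exact Complex.re_add_im w'
    have hre : w.re + 2 * (g (ψ w)).re = w'.re + 2 * (g (ψ w')).re := by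
      have h1 := congrArg Complex.re hFeq
      simpa [hFdef] using h1
    have hmono' : (∀ s ∈ Icc w.re w'.re, ((s : ℂ) + (a : ℂ) * I) ∈ Ω) → False := by
      intro hsub
      have := humono a w.re w'.re hlt hsub
      rw [hwa, hw'a] at this
      linarith
    have same : ∀ Θ : Set ℂ, CvxRe Θ → Θ ⊆ Ω → w ∈ Θ → w' ∈ Θ → False := by
      intro Θ hcv hsubΘ hwΘ hw'Θ
      apply hmono'
      intro s hs
      exact hsubΘ (hcv w hwΘ w' hw'Θ him (seg_aux him hlt.le hs))
    have mixed : ∀ Θ Θ' : Set ℂ, CvxRe Θ → CvxRe Θ' → Θ ∪ Θ' = Ω → w ∈ Θ → w' ∈ Θ' → False := by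
      intro Θ Θ' hcv hcv' hun hwΘ hw'Θ'
      by_cases hsub : ∀ s ∈ Icc w.re w'.re, ((s : ℂ) + (a : ℂ) * I) ∈ Ω
      · exact hmono' hsub
      push_neg at hsub
      obtain ⟨s, hsIcc, hsΩ⟩ := hsub
      have hs1 : w.re < s := by
        rcases eq_or_lt_of_le hsIcc.1 with he | hl
        · exact absurd (by rw [← he, hwa]; exact hw) hsΩ
        · exact hl
      have hs2 : s < w'.re := by
        rcases eq_or_lt_of_le hsIcc.2 with he | hl
        · exact absurd (by rw [he, hw'a]; exact hw') hsΩ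
        · exact hl
      have hnotLy : a ∉ Ly Ω := by
        intro hLyΩ
        have hco : IsConnected (Ω ∩ {z : ℂ | z.im = a}) := hLyΩ
        have hU : IsOpen {z : ℂ | z.re < s} := isOpen_lt Complex.continuous_re continuous_const
        have hV : IsOpen {z : ℂ | s < z.re} := isOpen_lt continuous_const Complex.continuous_re
        have hdisj : Disjoint {z : ℂ | z.re < s} {z : ℂ | s < z.re} := by
          rw [Set.disjoint_left]
          intro z h1 h2
          simp only [mem_setOf_eq] at h1 h2
          exact absurd h2 (not_lt.2 (le_of_lt h1))
        have hcover : Ω ∩ {z : ℂ | z.im = a} ⊆ {z : ℂ | z.re < s} ∪ {z : ℂ | s < z.re} := by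
          rintro z ⟨hzΩ, hza⟩
          rcases lt_trichotomy z.re s with hlt' | heq' | hgt'
          · exact Or.inl hlt'
          · exfalso
            apply hsΩ
            have hz : z = (s : ℂ) + (a : ℂ) * I := by
              apply Complex.ext
              · simpa using heq'
              · simpa using hza
            rwa [← hz]
          · exact Or.inr hgt'
        rcases hco.isPreconnected.subset_or_subset hU hV hdisj hcover with hsubU | hsubV
        · have : w' ∈ {z : ℂ | z.re < s} := hsubU ⟨hw', him.symm⟩
          exact absurd hs2 (not_lt.2 (le_of_lt this))
        · have : w ∈ {z : ℂ | s < z.re} := hsubV ⟨hw, rfl⟩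
          exact absurd hs1 (not_lt.2 (le_of_lt this))
      have hnotLyf : a ∉ Ly (f '' D) := by
        rw [← hLy]
        exact hnotLy
      apply hnotLyf
      show IsConnected (f '' D ∩ {z : ℂ | z.im = a})
      have hslice : ∀ X : Set ℂ, F '' X ∩ {z : ℂ | z.im = a} = F '' (X ∩ {z : ℂ | z.im = a}) := by
        intro X
        ext ζ
        constructor
        · rintro ⟨⟨x, hx, rfl⟩, hζ⟩
          exact ⟨x, ⟨hx, by rw [mem_setOf_eq, ← hFim x]; exact hζ⟩, rfl⟩
        · rintro ⟨x, ⟨hx, hxa⟩, rfl⟩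
          exact ⟨⟨x, hx, rfl⟩, by rw [mem_setOf_eq, hFim]; exact hxa⟩
      rw [hfD, hslice, show Ω = Θ ∪ Θ' from hun.symm, Set.union_inter_distrib_right,
        Set.image_union]
      have hΘΩ : Θ ⊆ Ω := by rw [← hun]; exact Set.subset_union_left
      have hΘ'Ω : Θ' ⊆ Ω := by rw [← hun]; exact Set.subset_union_right
      have h1p : IsPreconnected (F '' (Θ ∩ {z : ℂ | z.im = a})) :=
        ((cvx_slice hcv a).isPreconnected).image F
          (hFcont.mono ((Set.inter_subset_left).trans hΘΩ))
      have h2p : IsPreconnected (F '' (Θ' ∩ {z : ℂ | z.im = a})) :=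
        ((cvx_slice hcv' a).isPreconnected).image F
          (hFcont.mono ((Set.inter_subset_left).trans hΘ'Ω))
      have hmem1 : F w ∈ F '' (Θ ∩ {z : ℂ | z.im = a}) := ⟨w, ⟨hwΘ, rfl⟩, rfl⟩
      have hmem2 : F w ∈ F '' (Θ' ∩ {z : ℂ | z.im = a}) := by
        rw [hFeq]
        exact ⟨w', ⟨hw'Θ', him.symm⟩, rfl⟩
      exact ⟨⟨F w, Or.inl hmem1⟩, IsPreconnected.union' ⟨F w, hmem1, hmem2⟩ h1p h2p⟩
    rcases (hΩ12 ▸ hw : w ∈ Ω₁ ∪ Ω₂) with hw1 | hw2 <;>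
      rcases (hΩ12 ▸ hw' : w' ∈ Ω₁ ∪ Ω₂) with hw'1 | hw'2
    · exact same Ω₁ hΩ₁x (hΩ12 ▸ Set.subset_union_left) hw1 hw'1
    · exact mixed Ω₁ Ω₂ hΩ₁x hΩ₂x hΩ12.symm hw1 hw'2
    · exact mixed Ω₂ Ω₁ hΩ₂x hΩ₁x (by rw [Set.union_comm]; exact hΩ12.symm) hw2 hw'1
    · exact same Ω₂ hΩ₂x (hΩ12 ▸ Set.subset_union_right) hw2 hw'2
  -- injectivity
  have finj : Set.InjOn f D := by
    intro z1 h1 z2 h2 heq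
    have hw12 : F (φ z1) = F (φ z2) := by rw [hFf z1 h1, hFf z2 h2, heq]
    have him : (φ z1).im = (φ z2).im := by rw [← hFim (φ z1), ← hFim (φ z2), hw12]
    have hφeq : φ z1 = φ z2 := by
      rcases lt_trichotomy (φ z1).re (φ z2).re with hlt | heq' | hgt
      · exact (key _ _ ⟨z1, h1, rfl⟩ ⟨z2, h2, rfl⟩ him hw12 hlt).elim
      · exact Complex.ext heq' him
      · exact (key _ _ ⟨z2, h2, rfl⟩ ⟨z1, h1, rfl⟩ him.symm hw12.symm hgt).elim
    exact hinj h1 h2 hφeq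
  -- the image decomposition
  have hfopen : ∀ U : Set ℂ, U ⊆ D → IsOpen U → IsOpen (f '' U) := by
    intro U hUD hUo
    rw [isOpen_iff_mem_nhds]
    rintro ζ ⟨z, hz, rfl⟩
    have hmap := fmap_nhds (hhz z (hUD hz)) (hgz z (hUD hz)) (hJ z (hUD hz))
    have hfeq : f = fun z => h z + (starRingEnd ℂ) (g z) := funext hf
    rw [hfeq, ← hmap]
    exact Filter.image_mem_map (hUo.mem_nhds hz)
  have himg : ∀ Θ : Set ℂ, Θ ⊆ Ω → F '' Θ = f '' (D ∩ φ ⁻¹' Θ) := by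
    intro Θ hΘΩ
    ext ζ
    constructor
    · rintro ⟨x, hx, rfl⟩
      have hm := hψmem x (hΘΩ hx)
      have hFx := hFf (ψ x) hm
      rw [hφψ x (hΘΩ hx)] at hFx
      exact ⟨ψ x, ⟨hm, by rw [mem_preimage, hφψ x (hΘΩ hx)]; exact hx⟩, hFx.symm⟩
    · rintro ⟨z, ⟨hzD, hzΘ⟩, rfl⟩
      exact ⟨φ z, hzΘ, hFf z hzD⟩
  have hcvxF : ∀ Θ : Set ℂ, CvxRe Θ → Θ ⊆ Ω → CvxRe (F '' Θ) := by
    rintro Θ hcv hΘΩ ζ ⟨x, hx, rfl⟩ ζ' ⟨x', hx', rfl⟩ him p hp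
    have himx : x.im = x'.im := by rw [← hFim x, ← hFim x']; exact him
    have hsegΘ : segment ℝ x x' ⊆ Θ := hcv x hx x' hx' himx
    have hKp : IsPreconnected (F '' segment ℝ x x') :=
      ((convex_segment x x').isPreconnected).image F (hFcont.mono (hsegΘ.trans hΘΩ))
    have hKsub : F '' segment ℝ x x' ⊆ F '' Θ := Set.image_mono (f := F) hsegΘ
    have hKim : ∀ q ∈ F '' segment ℝ x x', q.im = x.im := by
      rintro q ⟨y, hy, rfl⟩
      rw [hFim]
      obtain ⟨α, β, hα, hβ, hαβ, rfl⟩ := hy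
      rw [Complex.add_im, Complex.smul_im, Complex.smul_im, ← himx]
      simp only [smul_eq_mul]
      linear_combination x.im * hαβ
    obtain ⟨α, β, hα, hβ, hαβ, rfl⟩ := hp
    have hpim : (α • F x + β • F x').im = x.im := by
      rw [Complex.add_im, Complex.smul_im, Complex.smul_im, hFim, hFim, ← himx]
      simp only [smul_eq_mul]
      linear_combination x.im * hαβ
    have hpre : (α • F x + β • F x').re ∈ uIcc (F x).re (F x').re := by
      rw [← segment_eq_uIcc]
      exact ⟨α, β, hα, hβ, hαβ, by
        simp only [Complex.add_re, Complex.smul_re, smul_eq_mul]⟩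
    have hreK : OrdConnected (Complex.re '' (F '' segment ℝ x x')) :=
      (hKp.image Complex.re Complex.continuous_re.continuousOn).ordConnected
    have hx_mem : (F x).re ∈ Complex.re '' (F '' segment ℝ x x') :=
      ⟨F x, ⟨x, left_mem_segment ℝ x x', rfl⟩, rfl⟩
    have hx'_mem : (F x').re ∈ Complex.re '' (F '' segment ℝ x x') :=
      ⟨F x', ⟨x', right_mem_segment ℝ x x', rfl⟩, rfl⟩
    obtain ⟨q, hqK, hqre⟩ := hreK.uIcc_subset hx_mem hx'_mem hpre
    have hqp : q = α • F x + β • F x' := Complex.ext hqre (by rw [hKim q hqK, hpim])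
    exact hqp ▸ hKsub hqK
  obtain ⟨w₀, hw₀⟩ := hΩ₀
  have hΘ₁Ω : Ω₁ ⊆ Ω := hΩ12 ▸ Set.subset_union_left
  have hΘ₂Ω : Ω₂ ⊆ Ω := hΩ12 ▸ Set.subset_union_right
  have hφcont : ContinuousOn φ D := hh.continuousOn.sub hg.continuousOn
  refine ⟨finj, F '' Ω₁, F '' Ω₂, ?_, ?_, ?_, ?_, ?_, ?_, ?_, ?_⟩
  · rw [himg Ω₁ hΘ₁Ω]
    exact hfopen _ Set.inter_subset_left (hφcont.isOpen_inter_preimage hDo hΩ₁o)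
  · exact hΩ₁c.image F (hFcont.mono hΘ₁Ω)
  · exact hcvxF Ω₁ hΩ₁x hΘ₁Ω
  · rw [himg Ω₂ hΘ₂Ω]
    exact hfopen _ Set.inter_subset_left (hφcont.isOpen_inter_preimage hDo hΩ₂o)
  · exact hΩ₂c.image F (hFcont.mono hΘ₂Ω)
  · exact hcvxF Ω₂ hΩ₂x hΘ₂Ω
  · exact ⟨F w₀, ⟨w₀, hw₀.1, rfl⟩, ⟨w₀, hw₀.2, rfl⟩⟩
  · rw [hfD, hΩ12, Set.image_union]
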